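/- Let r_1 ≥ r_2 ≥ ... ≥ r_m be real numbers sorted in descending order and let ν ∈ (0,1) with νm ∈ ℕ. Then min over ρ ∈ ℝ of ( -νρ + (1/m)·Σ_{i=1}^m max(ρ + r_i, 0) ) equals (ν)·(1/(νm))·Σ_{i=1}^{νm} r_i, i.e., ν times the average of the νm largest values. -/

import Mathlib

/-- Rockafellar–Uryasev representation of CVaR for a finite sample sorted in
descending order: the minimum over ρ of -νρ + (1/m)·Σ max(ρ+rᵢ,0) equals
ν times the average of the νm largest values. -/
theorem cvar_representation (m : ℕ) (hm : 0 < m) (r : Fin m → ℝ)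
    (hsort : ∀ i j : Fin m, i ≤ j → r j ≤ r i)
    (ν : ℝ) (hν : ν ∈ Set.Ioo (0 : ℝ) 1)
    (k : ℕ) (hk : (k : ℝ) = ν * m) :
    IsLeast {x : ℝ | ∃ ρ : ℝ, x = -ν * ρ + (1 / m) * ∑ i, max (ρ + r i) 0}
      (ν * ((1 / (k : ℝ)) * ∑ i : Fin m, if (i : ℕ) < k then r i else 0)) := by
  obtain ⟨hν0, hν1⟩ := hν
  have hmR : (0:ℝ) < m := by exact_mod_cast hm
  have hk0 : 0 < k := by
    have : (0:ℝ) < k := by rw [hk]; positivity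
    exact_mod_cast this
  have hklt : k < m := by
    have : (k:ℝ) < m := by rw [hk]; nlinarith
    exact_mod_cast this
  have hkR : (0:ℝ) < k := by exact_mod_cast hk0
  have hν_eq : ν = k / m := by rw [hk]; field_simp
  set S : ℝ := ∑ i : Fin m, if (i : ℕ) < k then r i else 0 with hS
  have htarget : ν * ((1/(k:ℝ)) * S) = S / m := by
    rw [hν_eq]; field_simp
  -- number of indices below k
  have hcount : ∀ c : ℝ, (∑ i : Fin m, if (i : ℕ) < k then c else 0) = k * c := by
    intro c
    rw [Fin.sum_univ_eq_sum_range (fun n => if n < k then c else 0) m]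
    rw [← Finset.sum_subset (Finset.range_subset_range.mpr hklt.le)
      (by intro x _ hx; simp [Finset.mem_range] at hx; simp [hx])]
    simp [Finset.sum_ite_of_true]
  constructor
  · -- membership: take ρ = -(r ⟨k-1, _⟩)
    have hj : k - 1 < m := by omega
    set j : Fin m := ⟨k - 1, hj⟩
    refine ⟨-(r j), ?_⟩
    have hmax : ∀ i : Fin m, max (-(r j) + r i) 0 =
        if (i : ℕ) < k then r i - r j else 0 := by
      intro i
      by_cases hi : (i : ℕ) < k
      · have hij : i ≤ j := by
          simp only [Fin.le_def, j]; omega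
        have := hsort i j hij
        rw [if_pos hi, max_eq_left (by linarith)]; ring
      · have hji : j ≤ i := by
          simp only [Fin.le_def, j]; omega
        have := hsort j i hji
        rw [if_neg hi, max_eq_right (by linarith)]
    have hsum : (∑ i, max (-(r j) + r i) 0) = S - k * r j := by
      simp only [hmax]
      have : ∀ i : Fin m, (if (i : ℕ) < k then r i - r j else 0) =
          (if (i : ℕ) < k then r i else 0) - (if (i : ℕ) < k then r j else 0) := by
        intro i; by_cases hi : (i : ℕ) < k <;> simp [hi]
      rw [Finset.sum_congr rfl (fun i _ => this i), Finset.sum_sub_distrib,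
        hcount (r j), hS]
    rw [hsum, htarget, hν_eq]
    field_simp
    ring
  · -- lower bound
    rintro x ⟨ρ, rfl⟩
    rw [htarget]
    have hbound : (∑ i : Fin m, if (i : ℕ) < k then ρ + r i else 0) ≤
        ∑ i, max (ρ + r i) 0 := by
      apply Finset.sum_le_sum
      intro i _
      by_cases hi : (i : ℕ) < k
      · simp [hi, le_max_left]
      · simp [hi, le_max_right]
    have hsplit : (∑ i : Fin m, if (i : ℕ) < k then ρ + r i else 0) = k * ρ + S := by
      have : ∀ i : Fin m, (if (i : ℕ) < k then ρ + r i else 0) =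
          (if (i : ℕ) < k then ρ else 0) + (if (i : ℕ) < k then r i else 0) := by
        intro i; by_cases hi : (i : ℕ) < k <;> simp [hi]
      rw [Finset.sum_congr rfl (fun i _ => this i), Finset.sum_add_distrib,
        hcount ρ, hS]
    rw [hν_eq]
    rw [hsplit] at hbound
    have h1 : (1 / (m:ℝ)) * (∑ i, max (ρ + r i) 0) ≥ (1 / (m:ℝ)) * (k * ρ + S) := by
      apply mul_le_mul_of_nonneg_left hbound (by positivity)
    have h2 : (-(↑k / ↑m) * ρ + 1 / ↑m * (↑k * ρ + S)) = S / m := by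
      field_simp; ring
    linarith
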